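/- (Sharpness of the Ax constant) Let π_1 be a p-th root of a uniformizer π of K. Then for σ ∈ Gal(K̄/K) one has v(σπ_1 - π_1) ≥ v(π_1) + 1/(p-1), with equality for some σ, while sup_{y ∈ K} v(π_1 - y) = v(π_1). Hence the constant 1/(p-1) in the Ax theorem cannot be improved. -/

import Mathlib

section AuxV

variable {L : Type*} [Field L] (v : L → EReal)
  (hv0 : v 0 = ⊤)
  (hvfin : ∀ x : L, x ≠ 0 → v x ≠ ⊤)
  (hvbot : ∀ x : L, v x ≠ ⊥)
  (hvmul : ∀ x y : L, v (x * y) = v x + v y)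
  (hvadd : ∀ x y : L, min (v x) (v y) ≤ v (x + y))

include hvfin hvbot hvmul in
lemma auxV_one : v 1 = 0 := by
  have h := hvmul 1 1
  rw [one_mul] at h
  obtain ⟨r, hr⟩ : ∃ r : ℝ, v 1 = (r : EReal) :=
    ⟨(v 1).toReal, (EReal.coe_toReal (hvfin 1 one_ne_zero) (hvbot 1)).symm⟩
  rw [hr, ← EReal.coe_add, EReal.coe_eq_coe_iff] at h
  have : r = 0 := by linarith
  rw [hr, this, EReal.coe_zero]

include hvfin hvbot hvmul in
lemma auxV_neg (x : L) : v (-x) = v x := by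
  have h1 : v ((-1 : L) * (-1 : L)) = v (-1) + v (-1) := hvmul _ _
  rw [neg_mul_neg, one_mul, auxV_one v hvfin hvbot hvmul] at h1
  obtain ⟨r, hr⟩ : ∃ r : ℝ, v (-1 : L) = (r : EReal) :=
    ⟨(v (-1 : L)).toReal,
      (EReal.coe_toReal (hvfin _ (by norm_num)) (hvbot _)).symm⟩
  rw [hr, ← EReal.coe_add] at h1
  have hr0 : r = 0 := by
    have := EReal.coe_eq_coe_iff.mp (h1.symm.trans EReal.coe_zero.symm)
    linarith
  have : v (-x) = v (-1 : L) + v x := by rw [← hvmul]; ring_nf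
  rw [this, hr, hr0, EReal.coe_zero, zero_add]

include hvfin hvbot hvmul in
lemma auxV_pow (x : L) (r : ℝ) (hx : v x = (r : EReal)) (n : ℕ) :
    v (x ^ n) = (((n : ℝ) * r : ℝ) : EReal) := by
  induction n with
  | zero => simp [auxV_one v hvfin hvbot hvmul]
  | succ n ih =>
      have : v (x ^ (n + 1)) = v x + v (x ^ n) := by rw [← hvmul, pow_succ, mul_comm]
      rw [this, hx, ih, ← EReal.coe_add, EReal.coe_eq_coe_iff]
      push_cast
      ring

include hvfin hvbot hvmul hvadd in
lemma auxV_strict (a b : L) (h : v a ≠ v b) : v (a + b) = min (v a) (v b) := by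
  rcases lt_or_gt_of_ne h with hlt | hlt
  · rw [min_eq_left hlt.le]
    have key := hvadd (a + b) (-b)
    rw [add_neg_cancel_right, auxV_neg v hvfin hvbot hvmul] at key
    refine le_antisymm ?_ (by simpa [min_eq_left hlt.le] using hvadd a b)
    by_contra hc
    push_neg at hc
    exact absurd key (not_le.mpr (lt_min hc hlt))
  · rw [min_eq_right hlt.le, add_comm]
    have key := hvadd (b + a) (-a)
    rw [add_neg_cancel_right, auxV_neg v hvfin hvbot hvmul] at key
    refine le_antisymm ?_ (by simpa [min_eq_left hlt.le] using hvadd b a)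
    by_contra hc
    push_neg at hc
    exact absurd key (not_le.mpr (lt_min hc hlt))

include hvfin hvbot hvmul in
lemma auxV_prod {ι : Type*} (s : Finset ι) (f : ι → L) :
    v (∏ i ∈ s, f i) = ∑ i ∈ s, v (f i) := by
  classical
  induction s using Finset.cons_induction with
  | empty => simpa using auxV_one v hvfin hvbot hvmul
  | cons a s ha ih => rw [Finset.prod_cons, Finset.sum_cons, hvmul, ih]

include hv0 hvfin hvbot hvmul hvadd in
lemma auxV_geom_nonneg (x : L) (hx : v x = 0) (n : ℕ) :
    0 ≤ v (∑ i ∈ Finset.range n, x ^ i) := by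
  induction n with
  | zero => simp [hv0]
  | succ n ih =>
      rw [Finset.sum_range_succ]
      refine le_trans (le_min ih ?_) (hvadd _ _)
      have := auxV_pow v hvfin hvbot hvmul x 0 (by simpa using hx) n
      simp only [mul_zero] at this
      rw [this, EReal.coe_zero]

include hv0 hvfin hvbot hvmul hvadd in
lemma auxV_A (η : L) (hη : v η = 0) (j : ℕ) : v (1 - η) ≤ v (1 - η ^ j) := by
  have hfact : 1 - η ^ j = (1 - η) * ∑ i ∈ Finset.range j, η ^ i := by
    have := geom_sum_mul η j
    linear_combination this
  rw [hfact, hvmul]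
  exact le_add_of_nonneg_right (auxV_geom_nonneg v hv0 hvfin hvbot hvmul hvadd η hη j)

lemma auxV_coe_sum {ι : Type*} (s : Finset ι) (f : ι → ℝ) :
    ((∑ i ∈ s, f i : ℝ) : EReal) = ∑ i ∈ s, ((f i : ℝ) : EReal) := by
  classical
  induction s using Finset.cons_induction with
  | empty => simp
  | cons a s ha ih => rw [Finset.sum_cons, Finset.sum_cons, EReal.coe_add, ih]

include hv0 hvfin hvbot hvmul hvadd in
lemma auxV_root (p : ℕ) [Fact p.Prime] (hvp : v ((p : ℕ) : L) = 1)
    (ζ : L) (hζp : ζ ^ p = 1) (hζ1 : ζ ≠ 1) :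
    v (ζ - 1) = ((1 / ((p : ℝ) - 1) : ℝ) : EReal) := by
  have hp : p.Prime := Fact.out
  have hζ0 : ζ ≠ 0 := by
    intro h; rw [h, zero_pow hp.ne_zero] at hζp; exact zero_ne_one hζp
  -- ζ is a primitive p-th root of unity
  have hord : orderOf ζ = p := by
    have hdvd : orderOf ζ ∣ p := orderOf_dvd_of_pow_eq_one hζp
    rcases (hp.eq_one_or_self_of_dvd _ hdvd) with h1 | h
    · exact absurd (orderOf_eq_one_iff.mp h1) hζ1
    · exact h
  have hprim : IsPrimitiveRoot ζ p := hord ▸ IsPrimitiveRoot.orderOf ζ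
  have hn : p - 1 + 1 = p := Nat.succ_pred_eq_of_pos hp.pos
  have hprim' : IsPrimitiveRoot ζ (p - 1 + 1) := hn ▸ hprim
  have hprod := hprim'.prod_one_sub_pow_eq_order
  -- v ζ = 0
  have hvζ : v ζ = 0 := by
    obtain ⟨r, hr⟩ : ∃ r : ℝ, v ζ = (r : EReal) :=
      ⟨(v ζ).toReal, (EReal.coe_toReal (hvfin _ hζ0) (hvbot _)).symm⟩
    have h := auxV_pow v hvfin hvbot hvmul ζ r hr p
    rw [hζp, auxV_one v hvfin hvbot hvmul] at h
    have : (p : ℝ) * r = 0 := by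
      have := EReal.coe_eq_coe_iff.mp (h.symm.trans EReal.coe_zero.symm).symm
      linarith [this]
    have hr0 : r = 0 := by
      rcases mul_eq_zero.mp this with h' | h'
      · exact absurd h' (Nat.cast_ne_zero.mpr hp.ne_zero)
      · exact h'
    rw [hr, hr0, EReal.coe_zero]
  -- all factors have the same valuation
  have hterm : ∀ k ∈ Finset.range (p - 1), v (1 - ζ ^ (k + 1)) = v (1 - ζ) := by
    intro k hk
    have hklt : k + 1 < p := by
      have := Finset.mem_range.mp hk; omega
    refine le_antisymm ?_ (auxV_A v hv0 hvfin hvbot hvmul hvadd ζ hvζ (k + 1))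
    have hcop : (k + 1).Coprime p :=
      Nat.Coprime.symm (hp.coprime_iff_not_dvd.mpr (Nat.not_dvd_of_pos_of_lt (Nat.succ_pos k) hklt))
    have hprimk : IsPrimitiveRoot (ζ ^ (k + 1)) p := hprim.pow_of_coprime (k + 1) hcop
    haveI : NeZero p := ⟨hp.ne_zero⟩
    obtain ⟨j, -, hj⟩ := hprimk.eq_pow_of_pow_eq_one hζp
    have hvζk : v (ζ ^ (k + 1)) = 0 := by
      have := auxV_pow v hvfin hvbot hvmul ζ 0 (by simpa using hvζ) (k + 1)
      simpa using this
    have := auxV_A v hv0 hvfin hvbot hvmul hvadd (ζ ^ (k + 1)) hvζk j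
    rwa [hj] at this
  -- apply v to the product identity
  have hv_prod := auxV_prod v hvfin hvbot hvmul (Finset.range (p - 1))
      (fun k => 1 - ζ ^ (k + 1))
  rw [hprod] at hv_prod
  rw [Finset.sum_congr rfl hterm] at hv_prod
  -- value of RHS
  have hRHS : v (((p - 1 : ℕ) : L) + 1) = 1 := by
    have : (((p - 1 : ℕ) : L) + 1) = ((p : ℕ) : L) := by
      conv_rhs => rw [← hn]
      push_cast
      ring
    rw [this, hvp]
  rw [hRHS] at hv_prod
  -- extract the real value
  obtain ⟨c, hc⟩ : ∃ c : ℝ, v (1 - ζ) = (c : EReal) :=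
    ⟨(v (1 - ζ)).toReal,
      (EReal.coe_toReal (hvfin _ (sub_ne_zero.mpr (Ne.symm hζ1))) (hvbot _)).symm⟩
  rw [hc] at hv_prod
  have hsum : (∑ _k ∈ Finset.range (p - 1), ((c : ℝ) : EReal))
      = (((p - 1 : ℕ) * c : ℝ) : EReal) := by
    rw [← auxV_coe_sum, Finset.sum_const, Finset.card_range, nsmul_eq_mul]
  rw [hsum] at hv_prod
  have h1 : ((p - 1 : ℕ) : ℝ) * c = 1 := by
    have := EReal.coe_eq_one.mp hv_prod.symm
    linarith [this]
  have hcast : ((p - 1 : ℕ) : ℝ) = (p : ℝ) - 1 := by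
    rw [Nat.cast_sub hp.one_le, Nat.cast_one]
  have hpne : (p : ℝ) - 1 ≠ 0 := by
    have : (2 : ℝ) ≤ (p : ℝ) := by exact_mod_cast hp.two_le
    linarith
  have hcval : c = 1 / ((p : ℝ) - 1) := by
    rw [hcast] at h1
    field_simp
    linarith
  rw [show ζ - 1 = -(1 - ζ) by ring, auxV_neg v hvfin hvbot hvmul, hc, hcval]

end AuxV

/-- Sharpness of the Ax constant.  `K` is finite totally ramified over `Frac W(k)` with
index `e` (encoded via the valuation `v` on an algebraic closure of `K`), `π` a uniformizer
of `K` and `π_1` a `p`-th root of `π`.  Then `v (σ π_1 - π_1) ≥ v π_1 + 1/(p-1)` for all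
`σ ∈ Gal(K̄/K)`, with equality for some `σ`, while `sup_{y ∈ K} v (π_1 - y) = v π_1`
(the supremum being attained, e.g. at `y = 0`).  Hence the constant `1/(p-1)` in Ax's
theorem cannot be improved. -/
theorem stmt7 (p : ℕ) [Fact p.Prime] (K : Type) [Field K] [CharZero K]
    (e : ℕ) (he : 0 < e)
    (v : AlgebraicClosure K → EReal)
    (hv0 : v 0 = ⊤)
    (hvfin : ∀ x : AlgebraicClosure K, x ≠ 0 → v x ≠ ⊤)
    (hvbot : ∀ x : AlgebraicClosure K, v x ≠ ⊥)
    (hvmul : ∀ x y : AlgebraicClosure K, v (x * y) = v x + v y)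
    (hvadd : ∀ x y : AlgebraicClosure K, min (v x) (v y) ≤ v (x + y))
    (hvp : v ((p : ℕ) : AlgebraicClosure K) = 1)
    (π : K)
    (hπ : v (algebraMap K (AlgebraicClosure K) π) = (((e : ℝ)⁻¹ : ℝ) : EReal))
    (hdisc : ∀ y : K, y ≠ 0 →
      ∃ m : ℤ, v (algebraMap K (AlgebraicClosure K) y) = (((m : ℝ) / e : ℝ) : EReal))
    (π₁ : AlgebraicClosure K) (hπ₁ : π₁ ^ p = algebraMap K (AlgebraicClosure K) π) :
    (∀ σ : AlgebraicClosure K ≃ₐ[K] AlgebraicClosure K,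
        v π₁ + ((1 / ((p : ℝ) - 1) : ℝ) : EReal) ≤ v (σ π₁ - π₁)) ∧
    (∃ σ : AlgebraicClosure K ≃ₐ[K] AlgebraicClosure K,
        v (σ π₁ - π₁) = v π₁ + ((1 / ((p : ℝ) - 1) : ℝ) : EReal)) ∧
    (∀ y : K, v (π₁ - algebraMap K (AlgebraicClosure K) y) ≤ v π₁) ∧
    (∃ y : K, v (π₁ - algebraMap K (AlgebraicClosure K) y) = v π₁) := by
  have hp : p.Prime := Fact.out
  -- basic nonvanishing
  have hπL : v ((algebraMap K (AlgebraicClosure K)) π) ≠ ⊤ := by rw [hπ]; exact EReal.coe_ne_top _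
  have hπ₁0 : π₁ ≠ 0 := by
    intro h
    rw [h, zero_pow hp.ne_zero] at hπ₁
    exact hπL (hπ₁ ▸ hv0)
  -- real value of v π₁
  obtain ⟨r₁, hr₁⟩ : ∃ r : ℝ, v π₁ = (r : EReal) :=
    ⟨(v π₁).toReal, (EReal.coe_toReal (hvfin _ hπ₁0) (hvbot _)).symm⟩
  have hr₁val : (p : ℝ) * r₁ = (e : ℝ)⁻¹ := by
    have h := auxV_pow v hvfin hvbot hvmul π₁ r₁ hr₁ p
    rw [hπ₁, hπ] at h
    exact (EReal.coe_eq_coe_iff.mp h.symm)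
  -- key computation for any σ moving π₁
  have key : ∀ σ : AlgebraicClosure K ≃ₐ[K] AlgebraicClosure K, σ π₁ ≠ π₁ →
      v (σ π₁ - π₁) = v π₁ + ((1 / ((p : ℝ) - 1) : ℝ) : EReal) := by
    intro σ hne
    have hσp : (σ π₁) ^ p = π₁ ^ p := by
      rw [← map_pow, hπ₁, AlgEquiv.commutes]
    set ζ : AlgebraicClosure K := σ π₁ / π₁ with hζ
    have hζp : ζ ^ p = 1 := by
      rw [hζ, div_pow, hσp, div_self (pow_ne_zero _ hπ₁0)]
    have hζ1 : ζ ≠ 1 := by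
      intro h
      exact hne ((div_eq_one_iff_eq hπ₁0).mp h)
    have hfact : σ π₁ - π₁ = (ζ - 1) * π₁ := by
      rw [hζ, sub_mul, div_mul_cancel₀ _ hπ₁0, one_mul]
    rw [hfact, hvmul,
      auxV_root v hv0 hvfin hvbot hvmul hvadd p hvp ζ hζp hζ1, add_comm]
  constructor
  · -- part 1
    intro σ
    by_cases h : σ π₁ = π₁
    · have : σ π₁ - π₁ = 0 := by rw [h, sub_self]
      rw [this, hv0]
      exact le_top
    · rw [key σ h]
  refine ⟨?_, ?_, ⟨0, by rw [map_zero, sub_zero]⟩⟩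
  · -- part 2 : existence of σ moving π₁
    have hint : IsIntegral K π₁ := Algebra.IsIntegral.isIntegral π₁
    have hsep : IsSeparable K π₁ := Algebra.IsSeparable.isSeparable K π₁
    have hsplit : ((minpoly K π₁).map (algebraMap K (AlgebraicClosure K))).Splits := IsAlgClosed.splits _
    have hnotmem : π₁ ∉ (⊥ : Subalgebra K (AlgebraicClosure K)) := by
      intro hmem
      obtain ⟨y, hy⟩ := Algebra.mem_bot.mp hmem
      have hy0 : y ≠ 0 := by
        intro h; rw [h, map_zero] at hy; exact hπ₁0 hy.symm
      obtain ⟨m, hm⟩ := hdisc y hy0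
      have : (m : ℝ) / e = r₁ := by
        rw [hy] at hm
        exact EReal.coe_eq_coe_iff.mp (hm.symm.trans hr₁)
      have hmpe : (p : ℝ) * ((m : ℝ) / e) = (e : ℝ)⁻¹ := by rw [this]; exact hr₁val
      have he0 : (e : ℝ) ≠ 0 := Nat.cast_ne_zero.mpr he.ne'
      have hpm : (p : ℝ) * m = 1 := by
        field_simp at hmpe
        linarith
      have hpmZ : (p : ℤ) * m = 1 := by exact_mod_cast hpm
      have : (p : ℤ) = 1 := Int.eq_one_of_mul_eq_one_right (by positivity) hpmZ
      have : p = 1 := by exact_mod_cast this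
      exact hp.one_lt.ne' this
    obtain ⟨y, hne, hconj⟩ :=
      (notMem_iff_exists_ne_and_isConjRoot hsep hsplit).mp hnotmem
    obtain ⟨σ, hσ⟩ := IsConjRoot.exists_algEquiv hconj.symm
    exact ⟨σ, key σ (by rw [hσ]; exact hne.symm)⟩
  · -- part 3
    intro y
    by_cases hy : y = 0
    · rw [hy, map_zero, sub_zero]
    obtain ⟨m, hm⟩ := hdisc y hy
    have hne : v (-((algebraMap K (AlgebraicClosure K)) y)) ≠ v π₁ := by
      rw [auxV_neg v hvfin hvbot hvmul, hm, hr₁]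
      intro h
      have h' : (m : ℝ) / e = r₁ := EReal.coe_eq_coe_iff.mp h
      have hmpe : (p : ℝ) * ((m : ℝ) / e) = (e : ℝ)⁻¹ := by rw [h']; exact hr₁val
      have he0 : (e : ℝ) ≠ 0 := Nat.cast_ne_zero.mpr he.ne'
      have hpm : (p : ℝ) * m = 1 := by
        field_simp at hmpe
        linarith
      have hpmZ : (p : ℤ) * m = 1 := by exact_mod_cast hpm
      have : (p : ℤ) = 1 := Int.eq_one_of_mul_eq_one_right (by positivity) hpmZ
      have : p = 1 := by exact_mod_cast this
      exact hp.one_lt.ne' this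
    have := auxV_strict v hvfin hvbot hvmul hvadd π₁ (-((algebraMap K (AlgebraicClosure K)) y)) (fun h => hne h.symm)
    rw [← sub_eq_add_neg] at this
    rw [this]
    exact min_le_left _ _
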